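/- Let Δt, Δx, Δy > 0. Let ρ : ℤ² → ℝ (vertex values ρ_{k,l}), ρc : ℤ² → ℝ (cell-center values, ρc_{k,l} standing for ρ_{k+1/2, l+1/2}), and let σx, σy : ℤ² → ℝ be nowhere zero (σx_{k,l} standing for σ^S_{k+1/2,l} and σy_{k,l} for σ^S_{k,l+1/2}). For v = (v₁, v₂, v₃) ∈ S² define the face values g^x_{k,l}(v) := −(1/σx_{k,l})( v₁ (ρ_{k+1,l} − ρ_{k,l})/Δx + v₂ (ρc_{k,l} − ρc_{k,l−1})/Δy ) and g^y_{k,l}(v) := −(1/σy_{k,l})( v₁ (ρc_{k,l} − ρc_{k−1,l})/Δx + v₂ (ρ_{k,l+1} − ρ_{k,l})/Δy ). Then for all (k, l) ∈ ℤ²: −(1/(4π))[ (1/Δx) ∫_{S²} v₁ (g^x_{k,l}(v) − g^x_{k−1,l}(v)) dμ(v) + (1/Δy) ∫_{S²} v₂ (g^y_{k,l}(v) − g^y_{k,l−1}(v)) dμ(v) ] = (1/3)(1/Δx²)( (ρ_{k+1,l} − ρ_{k,l})/σx_{k,l} − (ρ_{k,l} − ρ_{k−1,l})/σx_{k−1,l}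 ) + (1/3)(1/Δy²)( (ρ_{k,l+1} − ρ_{k,l})/σy_{k,l} − (ρ_{k,l} − ρ_{k,l−1})/σy_{k,l−1} ). -/

import Mathlib

open MeasureTheory Real

/-- The unit sphere `S² ⊂ ℝ³`. -/
abbrev UnitSphere : Type := Metric.sphere (0 : EuclideanSpace ℝ (Fin 3)) 1

/-- The surface measure on `S²` (total measure `4π`). -/
noncomputable def sphereMeasure : Measure UnitSphere :=
  (volume : Measure (EuclideanSpace ℝ (Fin 3))).toSphere

section AuxSphere
open Set

noncomputable abbrev E3 := EuclideanSpace ℝ (Fin 3)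

lemma mem_sph (e : E3 ≃ₗᵢ[ℝ] E3) (v : UnitSphere) :
    e ↑v ∈ Metric.sphere (0 : E3) 1 := by
  have := v.2
  simp only [mem_sphere_iff_norm, sub_zero] at this ⊢
  rw [e.norm_map]; exact this

/-- Restriction of a linear isometry equivalence to the unit sphere. -/
noncomputable def sphMap (e : E3 ≃ₗᵢ[ℝ] E3) : UnitSphere ≃ᵐ UnitSphere where
  toEquiv :=
  { toFun := fun v => ⟨e v, mem_sph e v⟩
    invFun := fun v => ⟨e.symm v, mem_sph e.symm v⟩
    left_inv := fun v => by ext : 1; simp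
    right_inv := fun v => by ext : 1; simp }
  measurable_toFun :=
    (Continuous.subtype_mk (e.continuous.comp continuous_subtype_val) _).measurable
  measurable_invFun :=
    (Continuous.subtype_mk (e.symm.continuous.comp continuous_subtype_val) _).measurable

lemma sphMap_apply (e : E3 ≃ₗᵢ[ℝ] E3) (v : UnitSphere) :
    (sphMap e v : E3) = e ↑v := rfl

open Pointwise in
lemma sphMap_measurePreserving (e : E3 ≃ₗᵢ[ℝ] E3) :
    MeasurePreserving (sphMap e) sphereMeasure sphereMeasure := by
  refine ⟨(sphMap e).measurable, ?_⟩
  refine Measure.ext fun s hs => ?_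
  have hps : MeasurableSet (sphMap e ⁻¹' s) := (sphMap e).measurable hs
  rw [Measure.map_apply (sphMap e).measurable hs]
  show (volume : Measure E3).toSphere _ = (volume : Measure E3).toSphere s
  rw [Measure.toSphere_apply' _ hs, Measure.toSphere_apply' _ hps]
  congr 1
  -- image identity
  have h1 : (Subtype.val '' (sphMap e ⁻¹' s) : Set E3) = e.symm '' (Subtype.val '' s) := by
    ext x
    constructor
    · rintro ⟨v, hv, rfl⟩
      exact ⟨e ↑v, ⟨sphMap e v, hv, rfl⟩, by simp⟩
    · rintro ⟨y, ⟨w, hw, rfl⟩, rfl⟩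
      refine ⟨⟨e.symm ↑w, mem_sph e.symm w⟩, ?_, rfl⟩
      show sphMap e ⟨e.symm ↑w, _⟩ ∈ s
      have : sphMap e ⟨e.symm ↑w, mem_sph e.symm w⟩ = w := by
        ext : 1; simp [sphMap_apply]
      rwa [this]
  rw [h1]
  have h2 : Ioo (0:ℝ) 1 • (e.symm '' (Subtype.val '' s)) =
      e.symm '' (Ioo (0:ℝ) 1 • (Subtype.val '' s)) := by
    rw [← image2_smul, ← image2_smul]
    exact (Set.image_image2_distrib_right
      (fun (a : ℝ) (b : E3) => (e.symm.map_smul a b))).symm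
  rw [h2]
  have h3 : ⇑e.symm '' (Ioo (0:ℝ) 1 • (Subtype.val '' s))
      = ⇑e ⁻¹' (Ioo (0:ℝ) 1 • (Subtype.val '' s)) :=
    congrFun (Set.image_eq_preimage_of_inverse
      (fun x => e.apply_symm_apply x) (fun x => e.symm_apply_apply x)) _
  have h4 := e.toMeasurableEquiv.map_apply (μ := volume) (Ioo (0:ℝ) 1 • (Subtype.val '' s))
  rw [LinearIsometryEquiv.coe_toMeasurableEquiv, e.measurePreserving.map_eq] at h4
  rw [h3, ← h4]

lemma integral_sphMap (e : E3 ≃ₗᵢ[ℝ] E3) (f : UnitSphere → ℝ) :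
    ∫ v, f (sphMap e v) ∂sphereMeasure = ∫ v, f v ∂sphereMeasure :=
  (sphMap_measurePreserving e).integral_comp' (f := sphMap e) f

lemma gamma_five_half : Real.Gamma ((3:ℝ) / 2 + 1) = 3 / 4 * √π := by
  rw [Real.Gamma_add_one (by norm_num)]
  have : (3:ℝ)/2 = 1/2 + 1 := by norm_num
  rw [this, Real.Gamma_add_one (by norm_num), Real.Gamma_one_half_eq]
  ring

lemma sphereMeasure_univ : sphereMeasure Set.univ = ENNReal.ofReal (4 * π) := by
  rw [sphereMeasure, Measure.toSphere_apply_univ, EuclideanSpace.volume_ball]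
  simp only [Fintype.card_fin, finrank_euclideanSpace, Fintype.card_fin]
  rw [show ((3:ℕ):ℝ)/2 = (3:ℝ)/2 by norm_num, gamma_five_half]
  have hπ : 0 < π := Real.pi_pos
  have hsp : (0:ℝ) < √π := Real.sqrt_pos.mpr hπ
  rw [ENNReal.ofReal_one, one_pow, one_mul, ← ENNReal.ofReal_natCast,
    ← ENNReal.ofReal_mul (by norm_num)]
  congr 1
  have hsq : √π * √π = π := Real.mul_self_sqrt hπ.le
  field_simp
  ring_nf
  nlinarith [hsq]

instance : IsFiniteMeasure sphereMeasure := by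
  unfold sphereMeasure; infer_instance

lemma cont_coord (i : Fin 3) : Continuous (fun v : UnitSphere => (v : E3) i) := by
  have : (fun v : UnitSphere => (v : E3) i)
      = fun v : UnitSphere => EuclideanSpace.proj (𝕜 := ℝ) i (v : E3) := by
    funext v; simp
  rw [this]
  exact (EuclideanSpace.proj i).continuous.comp continuous_subtype_val

lemma integrable_cont {f : UnitSphere → ℝ} (hf : Continuous f) :
    Integrable f sphereMeasure := by
  refine hf.integrable_of_hasCompactSupport ?_
  exact IsCompact.of_isClosed_subset isCompact_univ (isClosed_tsupport f)
    (Set.subset_univ _)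

lemma integrable_coord_mul (i j : Fin 3) :
    Integrable (fun v : UnitSphere => (v : E3) i * (v : E3) j) sphereMeasure :=
  integrable_cont ((cont_coord i).mul (cont_coord j))

lemma integral_one_sphere : ∫ _ : UnitSphere, (1:ℝ) ∂sphereMeasure = 4 * π := by
  rw [integral_const, smul_eq_mul, mul_one, measureReal_def, sphereMeasure_univ,
    ENNReal.toReal_ofReal (by positivity)]

lemma coord_sq_sum (v : UnitSphere) :
    (v : E3) 0 ^ 2 + (v : E3) 1 ^ 2 + (v : E3) 2 ^ 2 = 1 := by
  have hv : ‖(v : E3)‖ = 1 := by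
    have := v.2
    simpa [mem_sphere_iff_norm] using this
  have := congrArg (· ^ 2) hv
  rw [EuclideanSpace.norm_eq] at this
  simp only [Real.sq_sqrt (Finset.sum_nonneg fun i _ => sq_nonneg _), one_pow] at this
  rw [Fin.sum_univ_three] at this
  simpa [sq_abs] using this

lemma sphMap_coord (e : E3 ≃ₗᵢ[ℝ] E3) (v : UnitSphere) (i : Fin 3) :
    (sphMap e v : E3) i = (e ↑v) i := rfl

noncomputable def swapIso (i j : Fin 3) : E3 ≃ₗᵢ[ℝ] E3 :=
  LinearIsometryEquiv.piLpCongrLeft 2 ℝ ℝ (Equiv.swap i j)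

lemma swapIso_apply (i j : Fin 3) (x : E3) (m : Fin 3) :
    swapIso i j x m = x (Equiv.swap i j m) := by
  rw [swapIso, LinearIsometryEquiv.piLpCongrLeft_apply]
  simp [Equiv.piCongrLeft'_apply, Equiv.symm_swap]

lemma integral_sq_eq (i j : Fin 3) :
    ∫ v : UnitSphere, (v : E3) i ^ 2 ∂sphereMeasure
      = ∫ v : UnitSphere, (v : E3) j ^ 2 ∂sphereMeasure := by
  have := integral_sphMap (swapIso i j) (fun v => (v : E3) j ^ 2)
  rw [← this]
  refine integral_congr_ae (Filter.Eventually.of_forall fun v => ?_)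
  show (v : E3) i ^ 2 = (sphMap (swapIso i j) v : E3) j ^ 2
  rw [sphMap_coord, swapIso_apply, Equiv.swap_apply_right]

lemma integral_coord_sq (i : Fin 3) :
    ∫ v : UnitSphere, (v : E3) i ^ 2 ∂sphereMeasure = 4 * π / 3 := by
  have hsum : (∫ v : UnitSphere, (v : E3) 0 ^ 2 ∂sphereMeasure)
      + (∫ v : UnitSphere, (v : E3) 1 ^ 2 ∂sphereMeasure)
      + (∫ v : UnitSphere, (v : E3) 2 ^ 2 ∂sphereMeasure) = 4 * π := by
    have hint : ∀ m : Fin 3,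
        Integrable (fun v : UnitSphere => (v : E3) m ^ 2) sphereMeasure := by
      intro m; simpa [sq] using integrable_coord_mul m m
    have h : ∫ v : UnitSphere, ((v : E3) 0 ^ 2 + (v : E3) 1 ^ 2 + (v : E3) 2 ^ 2)
        ∂sphereMeasure = 4 * π := by
      rw [← integral_one_sphere]
      exact integral_congr_ae (Filter.Eventually.of_forall fun v => coord_sq_sum v)
    have h01 : Integrable (fun v : UnitSphere => (v : E3) 0 ^ 2 + (v : E3) 1 ^ 2)
        sphereMeasure := (hint 0).add (hint 1)
    rwa [integral_add h01 (hint 2), integral_add (hint 0) (hint 1)] at h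
  have h01 := integral_sq_eq (0 : Fin 3) 1
  have h02 := integral_sq_eq (0 : Fin 3) 2
  have hi0 := integral_sq_eq i 0
  rw [← h01, ← h02] at hsum
  rw [hi0]
  linarith

noncomputable def negIso : E3 ≃ₗᵢ[ℝ] E3 :=
  LinearIsometryEquiv.piLpCongrRight 2
    (fun m : Fin 3 => if m = 0 then LinearIsometryEquiv.neg ℝ (E := ℝ)
      else LinearIsometryEquiv.refl ℝ ℝ)

lemma negIso_apply (x : E3) (m : Fin 3) :
    negIso x m = if m = 0 then -(x m) else x m := by
  rw [negIso, LinearIsometryEquiv.piLpCongrRight_apply]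
  by_cases h : m = 0
  · subst h; simp
  · simp [h]

lemma integral_coord_mul_01 :
    ∫ v : UnitSphere, (v : E3) 0 * (v : E3) 1 ∂sphereMeasure = 0 := by
  have := integral_sphMap negIso (fun v => (v : E3) 0 * (v : E3) 1)
  have heq : (fun v : UnitSphere => (sphMap negIso v : E3) 0 * (sphMap negIso v : E3) 1)
      = fun v : UnitSphere => -((v : E3) 0 * (v : E3) 1) := by
    funext v
    rw [sphMap_coord, sphMap_coord, negIso_apply, negIso_apply]
    norm_num
  rw [heq, integral_neg] at this
  linarith

lemma key_int (i : Fin 3) (a b : ℝ) :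
    ∫ v : UnitSphere, (v : E3) i * (a * (v : E3) 0 + b * (v : E3) 1) ∂sphereMeasure
      = (a * ∫ v : UnitSphere, (v : E3) i * (v : E3) 0 ∂sphereMeasure)
        + b * ∫ v : UnitSphere, (v : E3) i * (v : E3) 1 ∂sphereMeasure := by
  have h : ∀ v : UnitSphere, (v : E3) i * (a * (v : E3) 0 + b * (v : E3) 1)
      = a * ((v : E3) i * (v : E3) 0) + b * ((v : E3) i * (v : E3) 1) := fun v => by ring
  rw [integral_congr_ae (Filter.Eventually.of_forall h),
    integral_add ((integrable_coord_mul i 0).const_mul a)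
      ((integrable_coord_mul i 1).const_mul b),
    MeasureTheory.integral_const_mul, MeasureTheory.integral_const_mul]

lemma key0 (a b : ℝ) :
    ∫ v : UnitSphere, (v : E3) 0 * (a * (v : E3) 0 + b * (v : E3) 1) ∂sphereMeasure
      = a * (4 * π / 3) := by
  rw [key_int]
  have h0 : ∫ v : UnitSphere, (v : E3) 0 * (v : E3) 0 ∂sphereMeasure = 4 * π / 3 := by
    rw [← integral_coord_sq 0]
    exact integral_congr_ae (Filter.Eventually.of_forall fun v => (sq _).symm)
  rw [h0, integral_coord_mul_01]
  ring

lemma key1 (a b : ℝ) :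
    ∫ v : UnitSphere, (v : E3) 1 * (a * (v : E3) 0 + b * (v : E3) 1) ∂sphereMeasure
      = b * (4 * π / 3) := by
  rw [key_int]
  have h0 : ∫ v : UnitSphere, (v : E3) 1 * (v : E3) 0 ∂sphereMeasure = 0 := by
    rw [← integral_coord_mul_01]
    exact integral_congr_ae (Filter.Eventually.of_forall fun v => mul_comm _ _)
  have h1 : ∫ v : UnitSphere, (v : E3) 1 * (v : E3) 1 ∂sphereMeasure = 4 * π / 3 := by
    rw [← integral_coord_sq 1]
    exact integral_congr_ae (Filter.Eventually.of_forall fun v => (sq _).symm)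
  rw [h0, h1]
  ring


end AuxSphere

/-- Asymptotic-preserving property of the fully discrete staggered-grid scheme:
substituting the `ε → 0` limit of the micro part into the discrete macro update yields
the standard explicit 5-point finite difference discretization of the diffusion
operator `∇·((1/(3σ^S))∇ρ)`. -/
theorem discrete_ap_five_point
    (Δt Δx Δy : ℝ) (hΔt : 0 < Δt) (hΔx : 0 < Δx) (hΔy : 0 < Δy)
    (ρ ρc σx σy : ℤ → ℤ → ℝ)
    (hσx : ∀ k l, σx k l ≠ 0) (hσy : ∀ k l, σy k l ≠ 0)
    (gx gy : ℤ → ℤ → UnitSphere → ℝ)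
    (hgx : ∀ k l (v : UnitSphere), gx k l v
      = -(1 / σx k l) * ((v : EuclideanSpace ℝ (Fin 3)) 0 * (ρ (k + 1) l - ρ k l) / Δx
          + (v : EuclideanSpace ℝ (Fin 3)) 1 * (ρc k l - ρc k (l - 1)) / Δy))
    (hgy : ∀ k l (v : UnitSphere), gy k l v
      = -(1 / σy k l) * ((v : EuclideanSpace ℝ (Fin 3)) 0 * (ρc k l - ρc (k - 1) l) / Δx
          + (v : EuclideanSpace ℝ (Fin 3)) 1 * (ρ k (l + 1) - ρ k l) / Δy)) :
    ∀ k l : ℤ,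
      -(1 / (4 * π)) *
        ((1 / Δx) * ∫ v : UnitSphere,
            (v : EuclideanSpace ℝ (Fin 3)) 0 * (gx k l v - gx (k - 1) l v) ∂sphereMeasure
          + (1 / Δy) * ∫ v : UnitSphere,
            (v : EuclideanSpace ℝ (Fin 3)) 1 * (gy k l v - gy k (l - 1) v) ∂sphereMeasure)
      = (1 / 3) * (1 / Δx ^ 2) *
            ((ρ (k + 1) l - ρ k l) / σx k l - (ρ k l - ρ (k - 1) l) / σx (k - 1) l)
        + (1 / 3) * (1 / Δy ^ 2) *
            ((ρ k (l + 1) - ρ k l) / σy k l - (ρ k l - ρ k (l - 1)) / σy k (l - 1)) := by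
  intro k l
  set A1 : ℝ := (ρ k l - ρ (k - 1) l) / σx (k - 1) l / Δx
      - (ρ (k + 1) l - ρ k l) / σx k l / Δx with hA1
  set B1 : ℝ := (ρc (k - 1) l - ρc (k - 1) (l - 1)) / σx (k - 1) l / Δy
      - (ρc k l - ρc k (l - 1)) / σx k l / Δy with hB1
  set A2 : ℝ := (ρc k (l - 1) - ρc (k - 1) (l - 1)) / σy k (l - 1) / Δx
      - (ρc k l - ρc (k - 1) l) / σy k l / Δx with hA2
  set B2 : ℝ := (ρ k l - ρ k (l - 1)) / σy k (l - 1) / Δy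
      - (ρ k (l + 1) - ρ k l) / σy k l / Δy with hB2
  have hx : ∀ v : UnitSphere, (v : E3) 0 * (gx k l v - gx (k - 1) l v)
      = (v : E3) 0 * (A1 * (v : E3) 0 + B1 * (v : E3) 1) := by
    intro v
    rw [hgx k l v, hgx (k - 1) l v, sub_add_cancel, hA1, hB1]
    ring
  have hy : ∀ v : UnitSphere, (v : E3) 1 * (gy k l v - gy k (l - 1) v)
      = (v : E3) 1 * (A2 * (v : E3) 0 + B2 * (v : E3) 1) := by
    intro v
    rw [hgy k l v, hgy k (l - 1) v, sub_add_cancel, hA2, hB2]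
    ring
  rw [integral_congr_ae (Filter.Eventually.of_forall hx),
    integral_congr_ae (Filter.Eventually.of_forall hy), key0, key1, hA1, hB2]
  have hπ : π ≠ 0 := Real.pi_ne_zero
  have hL : -(1 / (4 * π)) * ((1 / Δx) * (A1 * (4 * π / 3)) + (1 / Δy) * (B2 * (4 * π / 3)))
      = -(1/3) * (1/Δx) * A1 - (1/3) * (1/Δy) * B2 := by
    field_simp
    ring
  rw [hL]
  ring
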